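/- Let Ω ⊆ ℝ³ be a measurable set of finite Lebesgue measure, let ρ : Ω → ℝ be integrable with ρ ≥ 0 almost everywhere, and let n̂₀ : Ω → ℝ³ be measurable with |n̂₀| = 1 almost everywhere. Let F_k, R : Ω → ℝ^{3×3} (k ∈ ℕ) be measurable with det F_k > 0 almost everywhere for each k and R(x) ∈ SO(3) for almost every x (i.e., R(x)ᵀR(x) = I₃, det R(x) = 1), such that ∫_Ω |F_k − R|² dx → 0. Let n_k, n : Ω → ℝ³ be measurable with |n_k| = 1 almost everywhere for each k and ∫_Ω |n_k − n|² dx → 0. Then ∫_Ω | F_kᵀ n_k / |F_kᵀ n_k| − n̂₀ |² ρ dx → ∫_Ω | Rᵀ n − n̂₀ |² ρ dx as k → ∞. -/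

import Mathlib

open MeasureTheory Matrix Filter Topology
open scoped ENNReal

noncomputable section

/-- 2×2 real matrices. -/
abbrev M2 : Type := Matrix (Fin 2) (Fin 2) ℝ
/-- 3×3 real matrices. -/
abbrev M3 : Type := Matrix (Fin 3) (Fin 3) ℝ

/-- squared Frobenius norm of a 2×2 matrix -/
def frobSq2 (A : M2) : ℝ := ∑ i, ∑ j, (A i j) ^ 2

/-- squared Frobenius norm of a 3×3 matrix -/
def frobSq3 (A : M3) : ℝ := ∑ i, ∑ j, (A i j) ^ 2

/-- symmetric part of a matrix: `sym G = (G + Gᵀ)/2` -/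
def symPart (G : M3) : M3 := (1 / 2 : ℝ) • (G + Gᵀ)

/-- `ι A` : the 3×3 matrix with upper-left 2×2 block `A` and zeros elsewhere -/
def iota (A : M2) : M3 :=
  Matrix.of fun i j =>
    if hi : (i : ℕ) < 2 then (if hj : (j : ℕ) < 2 then A ⟨i, hi⟩ ⟨j, hj⟩ else 0) else 0

/-- `d ⊗ e₃` : the 3×3 matrix whose third column is `d` and whose other entries vanish -/
def tensorE3 (d : Fin 3 → ℝ) : M3 :=
  Matrix.of fun i j => if j = (2 : Fin 3) then d i else 0

/-- the product σ-algebra on 3×3 matrices (entrywise) -/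
instance : MeasurableSpace M3 := inferInstanceAs (MeasurableSpace (Fin 3 → Fin 3 → ℝ))

/-- normalization `v ↦ v/|v|` of a vector in ℝ³ (Euclidean norm) -/
def normalize3 (v : Fin 3 → ℝ) : Fin 3 → ℝ := (Real.sqrt (∑ i, v i ^ 2))⁻¹ • v

lemma normSq_normalize3_le_one (v : Fin 3 → ℝ) : ∑ i, (normalize3 v i) ^ 2 ≤ 1 := by
  have hs0 : 0 ≤ ∑ i, v i ^ 2 := Finset.sum_nonneg fun i _ => sq_nonneg _
  have : ∑ i, (normalize3 v i) ^ 2 = ((Real.sqrt (∑ i, v i ^ 2))⁻¹) ^ 2 * ∑ i, v i ^ 2 := by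
    simp [normalize3, Finset.mul_sum, mul_pow]
  rw [this]
  rcases eq_or_lt_of_le hs0 with h | h
  · rw [← h]; simp
  · rw [inv_pow, Real.sq_sqrt hs0, inv_mul_cancel₀ (ne_of_gt h)]

lemma sum_sq_mulVec_transpose (R : M3) (v : Fin 3 → ℝ)
    (h : Rᵀ * R = 1) : ∑ i, (Matrix.mulVec Rᵀ v i) ^ 2 = ∑ i, v i ^ 2 := by
  have hRR : R * Rᵀ = 1 := mul_eq_one_comm.mp h
  have h1 : ∑ i, (Matrix.mulVec Rᵀ v i) ^ 2 = (Rᵀ *ᵥ v) ⬝ᵥ (Rᵀ *ᵥ v) := by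
    simp [dotProduct, sq]
  have h2 : (Rᵀ *ᵥ v) ⬝ᵥ (Rᵀ *ᵥ v) = v ⬝ᵥ v := by
    rw [Matrix.mulVec_transpose]
    rw [show (v ᵥ* R) ⬝ᵥ (v ᵥ* R) = v ⬝ᵥ (R *ᵥ (v ᵥ* R)) from
      (Matrix.dotProduct_mulVec v R _).symm]
    rw [← Matrix.mulVec_transpose, Matrix.mulVec_mulVec, hRR]
    simp
  rw [h1, h2]; simp [dotProduct, sq]

theorem statement14 (Ω : Set (Fin 3 → ℝ)) (hΩ : MeasurableSet Ω)
    (hfin : volume Ω < ⊤)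
    (ρ : (Fin 3 → ℝ) → ℝ) (hρint : Integrable ρ (volume.restrict Ω))
    (hρpos : ∀ᵐ x ∂(volume.restrict Ω), 0 ≤ ρ x)
    (n0 : (Fin 3 → ℝ) → (Fin 3 → ℝ)) (hn0meas : Measurable n0)
    (hn0unit : ∀ᵐ x ∂(volume.restrict Ω), ∑ i, (n0 x i) ^ 2 = 1)
    (F : ℕ → (Fin 3 → ℝ) → M3) (hFmeas : ∀ k, Measurable (F k))
    (hFdet : ∀ k, ∀ᵐ x ∂(volume.restrict Ω), 0 < (F k x).det)
    (R : (Fin 3 → ℝ) → M3) (hRmeas : Measurable R)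
    (hSO : ∀ᵐ x ∂(volume.restrict Ω), (R x)ᵀ * R x = 1 ∧ (R x).det = 1)
    (hFconv : Tendsto (fun k => ∫⁻ x in Ω, ENNReal.ofReal (frobSq3 (F k x - R x)))
      atTop (𝓝 0))
    (n : ℕ → (Fin 3 → ℝ) → (Fin 3 → ℝ)) (hnmeas : ∀ k, Measurable (n k))
    (hnunit : ∀ k, ∀ᵐ x ∂(volume.restrict Ω), ∑ i, (n k x i) ^ 2 = 1)
    (nl : (Fin 3 → ℝ) → (Fin 3 → ℝ)) (hnlmeas : Measurable nl)
    (hnconv : Tendsto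
      (fun k => ∫⁻ x in Ω, ENNReal.ofReal (∑ i, ((n k x - nl x) i) ^ 2)) atTop (𝓝 0)) :
    Tendsto
      (fun k => ∫ x in Ω,
        (∑ i, ((normalize3 (Matrix.mulVec (F k x)ᵀ (n k x)) - n0 x) i) ^ 2) * ρ x)
      atTop
      (𝓝 (∫ x in Ω, (∑ i, ((Matrix.mulVec (R x)ᵀ (nl x) - n0 x) i) ^ 2) * ρ x)) := by
  set μ := volume.restrict Ω with hμ
  -- componentwise measurability
  have hFe : ∀ k (i j : Fin 3), Measurable fun x => F k x i j :=
    fun k i j => (measurable_pi_apply j).comp ((measurable_pi_apply i).comp (hFmeas k))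
  have hRe : ∀ (i j : Fin 3), Measurable fun x => R x i j :=
    fun i j => (measurable_pi_apply j).comp ((measurable_pi_apply i).comp hRmeas)
  have hne : ∀ k (j : Fin 3), Measurable fun x => n k x j :=
    fun k j => (measurable_pi_apply j).comp (hnmeas k)
  have hnle : ∀ (j : Fin 3), Measurable fun x => nl x j :=
    fun j => (measurable_pi_apply j).comp hnlmeas
  have hn0e : ∀ (j : Fin 3), Measurable fun x => n0 x j :=
    fun j => (measurable_pi_apply j).comp hn0meas
  have hfrobmeas : ∀ k, Measurable fun x => frobSq3 (F k x - R x) := by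
    intro k
    unfold frobSq3
    refine Finset.measurable_sum _ fun i _ => Finset.measurable_sum _ fun j _ => ?_
    simpa [Matrix.sub_apply] using ((hFe k i j).sub (hRe i j)).pow_const 2
  have hnsqmeas : ∀ k, Measurable fun x => ∑ i, ((n k x - nl x) i) ^ 2 := by
    intro k
    refine Finset.measurable_sum _ fun i _ => ?_
    simpa [Pi.sub_apply] using ((hne k i).sub (hnle i)).pow_const 2
  have hSmeas : ∀ k, Measurable fun x =>
      (∑ i, ((normalize3 (Matrix.mulVec (F k x)ᵀ (n k x)) - n0 x) i) ^ 2) := by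
    intro k
    have hv : ∀ i : Fin 3, Measurable fun x => Matrix.mulVec (F k x)ᵀ (n k x) i := by
      intro i
      simp only [Matrix.mulVec, dotProduct, Matrix.transpose_apply]
      exact Finset.measurable_sum _ fun j _ => (hFe k j i).mul (hne k j)
    refine Finset.measurable_sum _ fun i _ => ?_
    have hinv : Measurable fun x =>
        (Real.sqrt (∑ l, Matrix.mulVec (F k x)ᵀ (n k x) l ^ 2))⁻¹ :=
      (Real.continuous_sqrt.measurable.comp
        (Finset.measurable_sum _ fun l _ => (hv l).pow_const 2)).inv
    simp only [Pi.sub_apply, normalize3, Pi.smul_apply, smul_eq_mul]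
    exact ((hinv.mul (hv i)).sub (hn0e i)).pow_const 2
  refine tendsto_of_subseq_tendsto fun ns hns => ?_
  set A : ℕ → ℝ≥0∞ := fun k =>
    (∫⁻ x, ENNReal.ofReal (frobSq3 (F (ns k) x - R x)) ∂μ)
      + ∫⁻ x, ENNReal.ofReal (∑ i, ((n (ns k) x - nl x) i) ^ 2) ∂μ with hA
  have hAconv : Tendsto A atTop (𝓝 0) := by
    have := (hFconv.comp hns).add (hnconv.comp hns)
    simpa [hA, Function.comp] using this
  obtain ⟨φ, hφmono, hφ⟩ := Filter.extraction_forall_of_eventually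
    (P := fun m k => A k < (2 : ℝ≥0∞)⁻¹ ^ m)
    (fun m => hAconv.eventually (gt_mem_nhds (ENNReal.pow_pos (by simp) m)))
  set ks : ℕ → ℕ := fun m => ns (φ m) with hks
  set f : ℕ → (Fin 3 → ℝ) → ℝ≥0∞ := fun m x =>
    ENNReal.ofReal (frobSq3 (F (ks m) x - R x))
      + ENNReal.ofReal (∑ i, ((n (ks m) x - nl x) i) ^ 2) with hf
  have hfmeas : ∀ m, Measurable (f m) := fun m =>
    ((hfrobmeas (ks m)).ennreal_ofReal).add ((hnsqmeas (ks m)).ennreal_ofReal)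
  have hsum : ∑' m, ∫⁻ x, f m x ∂μ ≠ ⊤ := by
    have hle : ∀ m, ∫⁻ x, f m x ∂μ ≤ (2 : ℝ≥0∞)⁻¹ ^ m := by
      intro m
      rw [hf]
      rw [lintegral_add_left ((hfrobmeas (ks m)).ennreal_ofReal)]
      exact (hφ m).le
    refine ne_top_of_le_ne_top ?_ (ENNReal.tsum_le_tsum hle)
    rw [ENNReal.tsum_geometric]
    refine ENNReal.inv_ne_top.mpr ?_
    rw [Ne, tsub_eq_zero_iff_le]
    exact not_le.mpr (ENNReal.inv_lt_one.mpr (by norm_num))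
  have haetend : ∀ᵐ x ∂μ, Tendsto (fun m => f m x) atTop (𝓝 0) := by
    have hlt : ∫⁻ x, ∑' m, f m x ∂μ ≠ ⊤ := by
      rw [lintegral_tsum fun m => (hfmeas m).aemeasurable]; exact hsum
    filter_upwards [ae_lt_top (by exact Measurable.ennreal_tsum hfmeas) hlt] with x hx
    exact ENNReal.tendsto_atTop_zero_of_tsum_ne_top hx.ne
  refine ⟨φ, ?_⟩
  refine tendsto_integral_of_dominated_convergence (fun x => 4 * ‖ρ x‖)
    (fun m => ((hSmeas (ks m)).aestronglyMeasurable.mul hρint.aestronglyMeasurable))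
    (hρint.norm.const_mul 4) ?_ ?_
  · -- uniform bound
    intro m
    filter_upwards [hn0unit] with x hx0
    have ha := normSq_normalize3_le_one (Matrix.mulVec (F (ks m) x)ᵀ (n (ks m) x))
    set a := normalize3 (Matrix.mulVec (F (ks m) x)ᵀ (n (ks m) x)) with hadef
    have hS4 : ∑ i, ((a - n0 x) i) ^ 2 ≤ 4 := by
      have hterm : ∀ i : Fin 3, ((a - n0 x) i) ^ 2 ≤ 2 * (a i) ^ 2 + 2 * (n0 x i) ^ 2 := by
        intro i; simp only [Pi.sub_apply]; nlinarith [sq_nonneg (a i + n0 x i)]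
      calc ∑ i, ((a - n0 x) i) ^ 2
          ≤ ∑ i : Fin 3, (2 * (a i) ^ 2 + 2 * (n0 x i) ^ 2) :=
            Finset.sum_le_sum fun i _ => hterm i
        _ = 2 * (∑ i, (a i) ^ 2) + 2 * (∑ i, (n0 x i) ^ 2) := by
            rw [Finset.sum_add_distrib, Finset.mul_sum, Finset.mul_sum]
        _ ≤ 4 := by rw [hx0]; nlinarith
    have hS0 : 0 ≤ ∑ i, ((a - n0 x) i) ^ 2 := Finset.sum_nonneg fun i _ => sq_nonneg _
    rw [norm_mul]
    apply mul_le_mul_of_nonneg_right _ (norm_nonneg _)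
    rwa [Real.norm_eq_abs, abs_of_nonneg hS0]
  · -- a.e. convergence of the integrands
    filter_upwards [haetend, hSO, ae_all_iff.mpr hnunit] with x hfx hRx hux
    have hnnF : ∀ m, 0 ≤ frobSq3 (F (ks m) x - R x) :=
      fun m => Finset.sum_nonneg fun i _ => Finset.sum_nonneg fun j _ => sq_nonneg _
    have hnnn : ∀ m, 0 ≤ ∑ i, ((n (ks m) x - nl x) i) ^ 2 :=
      fun m => Finset.sum_nonneg fun i _ => sq_nonneg _
    have hfrob : Tendsto (fun m => frobSq3 (F (ks m) x - R x)) atTop (𝓝 0) := by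
      have h1 : Tendsto (fun m => ENNReal.ofReal (frobSq3 (F (ks m) x - R x)))
          atTop (𝓝 0) :=
        tendsto_of_tendsto_of_tendsto_of_le_of_le tendsto_const_nhds hfx
          (fun m => zero_le) (fun m => le_self_add)
      have h2 : Tendsto (fun m => (ENNReal.ofReal (frobSq3 (F (ks m) x - R x))).toReal)
          atTop (𝓝 0) := by
        simpa [Function.comp_def] using (ENNReal.tendsto_toReal (by simp)).comp h1
      exact h2.congr fun m => ENNReal.toReal_ofReal (hnnF m)
    have hnsq : Tendsto (fun m => ∑ i, ((n (ks m) x - nl x) i) ^ 2) atTop (𝓝 0) := by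
      have h1 : Tendsto (fun m => ENNReal.ofReal (∑ i, ((n (ks m) x - nl x) i) ^ 2))
          atTop (𝓝 0) :=
        tendsto_of_tendsto_of_tendsto_of_le_of_le tendsto_const_nhds hfx
          (fun m => zero_le) (fun m => le_add_self)
      have h2 : Tendsto (fun m => (ENNReal.ofReal (∑ i, ((n (ks m) x - nl x) i) ^ 2)).toReal)
          atTop (𝓝 0) := by
        simpa [Function.comp_def] using (ENNReal.tendsto_toReal (by simp)).comp h1
      exact h2.congr fun m => ENNReal.toReal_ofReal (hnnn m)
    have hFentry : ∀ i j : Fin 3, Tendsto (fun m => F (ks m) x i j) atTop (𝓝 (R x i j)) := by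
      intro i j
      have hsq : ∀ m, (F (ks m) x i j - R x i j) ^ 2 ≤ frobSq3 (F (ks m) x - R x) := by
        intro m
        have h1 : (F (ks m) x - R x) i j ^ 2 ≤ ∑ j', (F (ks m) x - R x) i j' ^ 2 :=
          Finset.single_le_sum (f := fun j' => (F (ks m) x - R x) i j' ^ 2)
            (fun j' _ => sq_nonneg _) (Finset.mem_univ j)
        have h2 : ∑ j', (F (ks m) x - R x) i j' ^ 2 ≤ frobSq3 (F (ks m) x - R x) :=
          Finset.single_le_sum (f := fun i' => ∑ j', (F (ks m) x - R x) i' j' ^ 2)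
            (fun i' _ => Finset.sum_nonneg fun j' _ => sq_nonneg _) (Finset.mem_univ i)
        simpa [Matrix.sub_apply] using h1.trans h2
      have hsqrt : Tendsto (fun m => Real.sqrt (frobSq3 (F (ks m) x - R x))) atTop (𝓝 0) := by
        simpa [Function.comp_def] using (Real.continuous_sqrt.tendsto 0).comp hfrob
      have habs : Tendsto (fun m => |F (ks m) x i j - R x i j|) atTop (𝓝 0) :=
        tendsto_of_tendsto_of_tendsto_of_le_of_le tendsto_const_nhds hsqrt
          (fun m => abs_nonneg _) (fun m => Real.abs_le_sqrt (hsq m))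
      have h0 : Tendsto (fun m => F (ks m) x i j - R x i j) atTop (𝓝 0) :=
        (tendsto_zero_iff_abs_tendsto_zero _).mpr habs
      simpa using h0.add_const (R x i j)
    have hnentry : ∀ j : Fin 3, Tendsto (fun m => n (ks m) x j) atTop (𝓝 (nl x j)) := by
      intro j
      have hsq : ∀ m, (n (ks m) x j - nl x j) ^ 2 ≤ ∑ i, ((n (ks m) x - nl x) i) ^ 2 := by
        intro m
        have h1 : ((n (ks m) x - nl x) j) ^ 2 ≤ ∑ i, ((n (ks m) x - nl x) i) ^ 2 :=
          Finset.single_le_sum (f := fun i => ((n (ks m) x - nl x) i) ^ 2)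
            (fun i _ => sq_nonneg _) (Finset.mem_univ j)
        simpa [Pi.sub_apply] using h1
      have hsqrt : Tendsto (fun m => Real.sqrt (∑ i, ((n (ks m) x - nl x) i) ^ 2))
          atTop (𝓝 0) := by
        simpa [Function.comp_def] using (Real.continuous_sqrt.tendsto 0).comp hnsq
      have habs : Tendsto (fun m => |n (ks m) x j - nl x j|) atTop (𝓝 0) :=
        tendsto_of_tendsto_of_tendsto_of_le_of_le tendsto_const_nhds hsqrt
          (fun m => abs_nonneg _) (fun m => Real.abs_le_sqrt (hsq m))
      have h0 : Tendsto (fun m => n (ks m) x j - nl x j) atTop (𝓝 0) :=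
        (tendsto_zero_iff_abs_tendsto_zero _).mpr habs
      simpa using h0.add_const (nl x j)
    have hv : ∀ i : Fin 3, Tendsto (fun m => Matrix.mulVec (F (ks m) x)ᵀ (n (ks m) x) i)
        atTop (𝓝 (Matrix.mulVec (R x)ᵀ (nl x) i)) := by
      intro i
      simp only [Matrix.mulVec, dotProduct, Matrix.transpose_apply]
      exact tendsto_finset_sum _ fun j _ => (hFentry j i).mul (hnentry j)
    have hnlunit : ∑ i, (nl x i) ^ 2 = 1 := by
      have h1 : Tendsto (fun m => ∑ i, (n (ks m) x i) ^ 2) atTop (𝓝 (∑ i, (nl x i) ^ 2)) :=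
        tendsto_finset_sum _ fun i _ => ((hnentry i).pow 2)
      have h2 : Tendsto (fun m => ∑ i, (n (ks m) x i) ^ 2) atTop (𝓝 1) := by
        simpa [hux] using (tendsto_const_nhds : Tendsto (fun _ : ℕ => (1 : ℝ)) atTop _)
      exact tendsto_nhds_unique h1 h2
    have hvunit : ∑ i, (Matrix.mulVec (R x)ᵀ (nl x) i) ^ 2 = 1 := by
      rw [sum_sq_mulVec_transpose (R x) (nl x) hRx.1]; exact hnlunit
    have hs : Tendsto (fun m => ∑ i, (Matrix.mulVec (F (ks m) x)ᵀ (n (ks m) x) i) ^ 2)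
        atTop (𝓝 1) := by
      rw [← hvunit]
      exact tendsto_finset_sum _ fun i _ => (hv i).pow 2
    have hc : Tendsto
        (fun m => (Real.sqrt (∑ i, (Matrix.mulVec (F (ks m) x)ᵀ (n (ks m) x) i) ^ 2))⁻¹)
        atTop (𝓝 1) := by
      have h1 : Tendsto (fun m => Real.sqrt (∑ i, (Matrix.mulVec (F (ks m) x)ᵀ (n (ks m) x) i) ^ 2))
          atTop (𝓝 1) := by
        simpa [Function.comp_def] using (Real.continuous_sqrt.tendsto 1).comp hs
      simpa using h1.inv₀ (by norm_num)
    refine Tendsto.mul_const _ ?_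
    have hterm : ∀ i : Fin 3, Tendsto
        (fun m => ((normalize3 (Matrix.mulVec (F (ks m) x)ᵀ (n (ks m) x)) - n0 x) i) ^ 2)
        atTop (𝓝 (((Matrix.mulVec (R x)ᵀ (nl x) - n0 x) i) ^ 2)) := by
      intro i
      have h1 : Tendsto (fun m => normalize3 (Matrix.mulVec (F (ks m) x)ᵀ (n (ks m) x)) i)
          atTop (𝓝 (Matrix.mulVec (R x)ᵀ (nl x) i)) := by
        simp only [normalize3, Pi.smul_apply, smul_eq_mul]
        simpa using hc.mul (hv i)
      simpa [Pi.sub_apply] using (h1.sub_const (n0 x i)).pow 2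
    exact tendsto_finset_sum _ fun i _ => hterm i
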